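/- Let X be a real Hilbert space, K ⊆ X nonempty closed convex, A : X → X Lipschitz with constant M_A and strongly monotone with constant m_A > 0, φ : X → ℝ convex and Lipschitz continuous on bounded sets, f ∈ X, and let u ∈ K be the solution of the variational inequality ⟪A u, v - u⟫ + φ(v) - φ(u) ≥ ⟪f, v - u⟫ for all v ∈ K. If a sequence {u_n} ⊆ X converges strongly to u, then: (a) dist(u_n, K) → 0, and (b) there exists a sequence ε_n ≥ 0 with ε_n → 0 such that ⟪A u_n, v - u_n⟫ + φ(v) - φ(u_n) + ε_n(1 + ‖v - u_n‖) ≥ ⟪f, v - u_n⟫ for all v ∈ K and all n. -/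

import Mathlib

open Filter Topology
open scoped RealInnerProductSpace

theorem stmt7 {X : Type*} [NormedAddCommGroup X] [InnerProductSpace ℝ X]
    (K : Set X) (hK : K.Nonempty) (hKc : IsClosed K) (hKconv : Convex ℝ K)
    (A : X → X) (mA MA : ℝ) (hmA : 0 < mA) (hMA : 0 < MA)
    (hsm : ∀ u v : X, mA * ‖u - v‖ ^ 2 ≤ ⟪A u - A v, u - v⟫)
    (hlip : ∀ u v : X, ‖A u - A v‖ ≤ MA * ‖u - v‖)
    (φ : X → ℝ) (hφ : ConvexOn ℝ Set.univ φ)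
    (hφloc : ∀ D : ℝ, 0 < D → ∃ L : ℝ, 0 < L ∧ ∀ u v : X, ‖u‖ ≤ D → ‖v‖ ≤ D →
      |φ u - φ v| ≤ L * ‖u - v‖)
    (f : X) (u : X) (huK : u ∈ K)
    (hvi : ∀ v ∈ K, ⟪f, v - u⟫ ≤ ⟪A u, v - u⟫ + φ v - φ u)
    (un : ℕ → X) (hconv : Tendsto un atTop (𝓝 u)) :
    Tendsto (fun n => Metric.infDist (un n) K) atTop (𝓝 0) ∧
    ∃ ε : ℕ → ℝ, (∀ n, 0 ≤ ε n) ∧ Tendsto ε atTop (𝓝 0) ∧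
      ∀ n, ∀ v ∈ K,
        ⟪f, v - un n⟫ ≤ ⟪A (un n), v - un n⟫ + φ v - φ (un n)
          + ε n * (1 + ‖v - un n‖) := by

  have hd : Tendsto (fun n => ‖un n - u‖) atTop (𝓝 0) := by
    rw [tendsto_iff_norm_sub_tendsto_zero] at hconv; exact hconv
  constructor
  · have h := ((Metric.continuous_infDist_pt K).tendsto u).comp hconv
    simp only [Function.comp_def] at h
    rwa [Metric.infDist_zero_of_mem huK] at h
  · obtain ⟨B, hB⟩ := hd.bddAbove_range
    have hBn : ∀ n, ‖un n - u‖ ≤ B := fun n => hB (Set.mem_range_self n)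
    have hB0 : 0 ≤ B := le_trans (norm_nonneg _) (hBn 0)
    have hD : (0:ℝ) < ‖u‖ + B + 1 := by positivity
    obtain ⟨L, hL0, hL⟩ := hφloc (‖u‖ + B + 1) hD
    set C : ℝ := MA + ‖A u‖ + L + ‖f‖ with hC
    have hC0 : 0 ≤ C := by positivity
    refine ⟨fun n => C * ‖un n - u‖, fun n => mul_nonneg hC0 (norm_nonneg _), ?_, ?_⟩
    · simpa using hd.const_mul C
    · intro n v hv
      have h1 := hvi v hv
      have key : ⟪A u, v - u⟫ = ⟪A (un n), v - un n⟫ + ⟪A u - A (un n), v - un n⟫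
          + ⟪A u, un n - u⟫ := by
        simp only [inner_sub_left, inner_sub_right]; ring
      have e1 : ⟪A u - A (un n), v - un n⟫ ≤ MA * ‖un n - u‖ * ‖v - un n‖ := by
        refine le_trans (real_inner_le_norm _ _) (mul_le_mul_of_nonneg_right ?_ (norm_nonneg _))
        have := hlip u (un n)
        rwa [norm_sub_rev u (un n)] at this
      have e2 : ⟪A u, un n - u⟫ ≤ ‖A u‖ * ‖un n - u‖ := real_inner_le_norm _ _
      have e3 : ⟪f, u - un n⟫ ≤ ‖f‖ * ‖un n - u‖ := by
        have := real_inner_le_norm f (u - un n)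
        rwa [norm_sub_rev u (un n)] at this
      have e4 : φ (un n) - φ u ≤ L * ‖un n - u‖ := by
        have h5 : ‖un n‖ ≤ ‖u‖ + B + 1 := by
          have := norm_sub_norm_le (un n) u
          have := hBn n; linarith
        have h6 : ‖u‖ ≤ ‖u‖ + B + 1 := by linarith
        have := hL (un n) u h5 h6
        have := abs_le.mp this
        linarith [this.2]
      have esplit : ⟪f, v - un n⟫ = ⟪f, v - u⟫ + ⟪f, u - un n⟫ := by
        rw [← inner_add_right]; congr 1; abel
      have ht : (0:ℝ) ≤ ‖v - un n‖ := norm_nonneg _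
      have hdn : (0:ℝ) ≤ ‖un n - u‖ := norm_nonneg _
      rw [esplit]
      have hAu : (0:ℝ) ≤ ‖A u‖ := norm_nonneg _
      have hf : (0:ℝ) ≤ ‖f‖ := norm_nonneg _
      show ⟪f, v - u⟫ + ⟪f, u - un n⟫ ≤ ⟪A (un n), v - un n⟫ + φ v - φ (un n)
          + C * ‖un n - u‖ * (1 + ‖v - un n‖)
      nlinarith [mul_nonneg (mul_nonneg hAu hdn) ht, mul_nonneg (mul_nonneg hL0.le hdn) ht,
        mul_nonneg (mul_nonneg hf hdn) ht, mul_nonneg (mul_nonneg hMA.le hdn) ht,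
        mul_nonneg hMA.le hdn]
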